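/- Let f satisfy Assumption 1 and u satisfy Assumption 2, and let (x^k)_{k≥0} be the random sequence generated by the RCD-IHT algorithm. Then there exists a nonnegative random variable F̃ such that F(x^k) → F̃ almost surely, and ‖x^{k+1} − x^k‖ → 0 almost surely. -/

import Mathlib

open scoped RealInnerProductSpace
open Finset

/-- The weighted ℓ₀ quasinorm `‖x‖_{0,λ}`. -/
noncomputable def l0norm {n N : ℕ} (blk : Fin n → Fin N) (lam : Fin N → ℝ)
    (x : EuclideanSpace ℝ (Fin n)) : ℝ :=
  ∑ j, if x j ≠ 0 then lam (blk j) else 0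

/-- Membership in `I(x) = supp(x) ∪ {j ∈ 𝒮ᵢ : λᵢ = 0}`. -/
def InIset {n N : ℕ} (blk : Fin n → Fin N) (lam : Fin N → ℝ)
    (x : EuclideanSpace ℝ (Fin n)) (j : Fin n) : Prop :=
  x j ≠ 0 ∨ lam (blk j) = 0

/-- Block restriction `xᵢ = Uᵢᵀ x`. -/
noncomputable def blkProj {n N : ℕ} (blk : Fin n → Fin N) (i : Fin N)
    (x : EuclideanSpace ℝ (Fin n)) : EuclideanSpace ℝ {j : Fin n // blk j = i} :=
  WithLp.toLp 2 (fun j => x j.1)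

/-- Block embedding `Uᵢ hᵢ`. -/
noncomputable def blkEmbed {n N : ℕ} (blk : Fin n → Fin N) (i : Fin N)
    (v : EuclideanSpace ℝ {j : Fin n // blk j = i}) : EuclideanSpace ℝ (Fin n) :=
  WithLp.toLp 2 (fun j => if h : blk j = i then v ⟨j, h⟩ else 0)

/-- Assumption 2 on the family of approximation functions `uᵢ(·;·)`, with gradients
(in the first argument) `guᵢ`, Lipschitz constants `Mᵢ > Lᵢ` and curvature constants
`μᵢ ∈ (0, Mᵢ - Lᵢ]`. -/
structure ApproxAssumption {n N : ℕ} (blk : Fin n → Fin N)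
    (f : EuclideanSpace ℝ (Fin n) → ℝ)
    (g : EuclideanSpace ℝ (Fin n) → EuclideanSpace ℝ (Fin n))
    (L : Fin N → ℝ)
    (u : ∀ i : Fin N, EuclideanSpace ℝ {j : Fin n // blk j = i} →
      EuclideanSpace ℝ (Fin n) → ℝ)
    (gu : ∀ i : Fin N, EuclideanSpace ℝ {j : Fin n // blk j = i} →
      EuclideanSpace ℝ (Fin n) → EuclideanSpace ℝ {j : Fin n // blk j = i})
    (M μ : Fin N → ℝ) : Prop where
  strictConvexOn : ∀ i x, StrictConvexOn ℝ Set.univ (fun v => u i v x)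
  hasGradient : ∀ i x v, HasGradientAt (fun w => u i w x) (gu i v x) v
  continuous_second : ∀ i v, Continuous fun x => u i v x
  value_at : ∀ i x, u i (blkProj blk i x) x = f x
  gradient_at : ∀ i x, gu i (blkProj blk i x) x = blkProj blk i (g x)
  lipschitz_grad : ∀ i x v w, ‖gu i v x - gu i w x‖ ≤ M i * ‖v - w‖
  M_gt_L : ∀ i, L i < M i
  mu_pos : ∀ i, 0 < μ i
  mu_le : ∀ i, μ i ≤ M i - L i
  lower_bound : ∀ i x v,
    f (x + blkEmbed blk i (v - blkProj blk i x)) + μ i / 2 * ‖v - blkProj blk i x‖ ^ 2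
      ≤ u i v x

/-- `z` is a `u`-strong local minimizer: `F(z) ≤ min_{yᵢ} uᵢ(yᵢ;z) + ‖z + Uᵢ(yᵢ - zᵢ)‖_{0,λ}`
for all blocks `i`. -/
def IsUStrongLocalMin {n N : ℕ} (blk : Fin n → Fin N) (lam : Fin N → ℝ)
    (f : EuclideanSpace ℝ (Fin n) → ℝ)
    (u : ∀ i : Fin N, EuclideanSpace ℝ {j : Fin n // blk j = i} →
      EuclideanSpace ℝ (Fin n) → ℝ)
    (z : EuclideanSpace ℝ (Fin n)) : Prop :=
  ∀ (i : Fin N) (y : EuclideanSpace ℝ {j : Fin n // blk j = i}),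
    f z + l0norm blk lam z ≤
      u i y z + l0norm blk lam (z + blkEmbed blk i (y - blkProj blk i z))

/-- The number of nonzero entries of a block vector, `‖yᵢ‖₀`, as a real number. -/
noncomputable def blkNnz {n N : ℕ} {blk : Fin n → Fin N} {i : Fin N}
    (v : EuclideanSpace ℝ {j : Fin n // blk j = i}) : ℝ :=
  ∑ j, if v j ≠ 0 then (1 : ℝ) else 0

/-- One iteration of the (RCD-IHT) method: block `i` of `x` is replaced by `T i x`. -/
noncomputable def rcdStep {n N : ℕ} (blk : Fin n → Fin N)
    (T : ∀ i : Fin N, EuclideanSpace ℝ (Fin n) →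
      EuclideanSpace ℝ {j : Fin n // blk j = i})
    (i : Fin N) (x : EuclideanSpace ℝ (Fin n)) : EuclideanSpace ℝ (Fin n) :=
  x + blkEmbed blk i (T i x - blkProj blk i x)

section Aux

variable {n N : ℕ}

lemma sum_subtype_blk (blk : Fin n → Fin N) (i : Fin N) (φ : Fin n → ℝ) :
    ∑ j ∈ Finset.univ.filter (fun j => blk j = i), φ j
      = ∑ j : {j : Fin n // blk j = i}, φ j.1 :=
  Finset.sum_subtype _ (by simp) φ

lemma norm_blkEmbed (blk : Fin n → Fin N) (i : Fin N)
    (v : EuclideanSpace ℝ {j : Fin n // blk j = i}) :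
    ‖blkEmbed blk i v‖ = ‖v‖ := by
  rw [EuclideanSpace.norm_eq, EuclideanSpace.norm_eq]
  congr 1
  rw [← Finset.sum_filter_add_sum_filter_not Finset.univ (fun j => blk j = i)]
  have h1 : ∑ j ∈ Finset.univ.filter (fun j => blk j = i), ‖blkEmbed blk i v j‖ ^ 2
      = ∑ j : {j : Fin n // blk j = i}, ‖v j‖ ^ 2 := by
    rw [sum_subtype_blk]
    refine Finset.sum_congr rfl fun j _ => ?_
    simp [blkEmbed, j.2]
  have h2 : ∑ j ∈ Finset.univ.filter (fun j => ¬ blk j = i), ‖blkEmbed blk i v j‖ ^ 2 = 0 := by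
    refine Finset.sum_eq_zero fun j hj => ?_
    have hj' : ¬ blk j = i := by simpa using (Finset.mem_filter.mp hj).2
    simp [blkEmbed, hj']
  rw [h1, h2, add_zero]

lemma l0_decomp (blk : Fin n → Fin N) (lam : Fin N → ℝ) (i : Fin N)
    (w : EuclideanSpace ℝ (Fin n)) :
    l0norm blk lam w = lam i * blkNnz (blkProj blk i w)
      + ∑ j ∈ Finset.univ.filter (fun j => ¬ blk j = i),
          (if w j ≠ 0 then lam (blk j) else 0) := by
  rw [l0norm, ← Finset.sum_filter_add_sum_filter_not Finset.univ (fun j => blk j = i)]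
  congr 1
  rw [sum_subtype_blk, blkNnz, Finset.mul_sum]
  refine Finset.sum_congr rfl fun j _ => ?_
  have hj : blk j.1 = i := j.2
  simp only [blkProj, WithLp.ofLp_toLp, hj]
  split_ifs <;> simp_all

lemma descent {n N : ℕ} (blk : Fin n → Fin N) (lam : Fin N → ℝ)
    (f : EuclideanSpace ℝ (Fin n) → ℝ)
    (g : EuclideanSpace ℝ (Fin n) → EuclideanSpace ℝ (Fin n))
    (L : Fin N → ℝ)
    (u : ∀ i : Fin N, EuclideanSpace ℝ {j : Fin n // blk j = i} →
      EuclideanSpace ℝ (Fin n) → ℝ)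
    (gu : ∀ i : Fin N, EuclideanSpace ℝ {j : Fin n // blk j = i} →
      EuclideanSpace ℝ (Fin n) → EuclideanSpace ℝ {j : Fin n // blk j = i})
    (M μ : Fin N → ℝ)
    (hu : ApproxAssumption blk f g L u gu M μ)
    (T : ∀ i : Fin N, EuclideanSpace ℝ (Fin n) →
      EuclideanSpace ℝ {j : Fin n // blk j = i})
    (hT : ∀ (i : Fin N) (x : EuclideanSpace ℝ (Fin n))
      (y : EuclideanSpace ℝ {j : Fin n // blk j = i}),
      u i (T i x) x + lam i * blkNnz (T i x) ≤ u i y x + lam i * blkNnz y)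
    (i : Fin N) (x : EuclideanSpace ℝ (Fin n)) :
    f (rcdStep blk T i x) + l0norm blk lam (rcdStep blk T i x)
      + μ i / 2 * ‖rcdStep blk T i x - x‖ ^ 2
      ≤ f x + l0norm blk lam x := by
  set y := T i x with hy
  set px := blkProj blk i x with hpx
  set z := rcdStep blk T i x with hz
  have hzdef : z = x + blkEmbed blk i (y - px) := rfl
  have hzx : z - x = blkEmbed blk i (y - px) := by rw [hzdef]; abel
  have hnorm : ‖z - x‖ = ‖y - px‖ := by rw [hzx, norm_blkEmbed]
  have h1 : f z + μ i / 2 * ‖y - px‖ ^ 2 ≤ u i y x := hu.lower_bound i x y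
  have h2 : u i y x + lam i * blkNnz y ≤ f x + lam i * blkNnz px := by
    have h := hT i x px
    rwa [hu.value_at i x] at h
  have hpz : blkProj blk i z = y := by
    ext j
    have hj : blk j.1 = i := j.2
    show z j.1 = y j
    simp [hzdef, blkEmbed, blkProj, hpx, hj, PiLp.add_apply, PiLp.sub_apply,
      Subtype.coe_eta]
  have hoff : ∀ j, ¬ blk j = i → z j = x j := by
    intro j hj
    simp [hzdef, blkEmbed, hj, PiLp.add_apply]
  have hl0 : l0norm blk lam z + lam i * blkNnz px
      = l0norm blk lam x + lam i * blkNnz y := by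
    rw [l0_decomp blk lam i z, l0_decomp blk lam i x, hpz]
    have htail : ∑ j ∈ Finset.univ.filter (fun j => ¬ blk j = i),
          (if z j ≠ 0 then lam (blk j) else 0)
        = ∑ j ∈ Finset.univ.filter (fun j => ¬ blk j = i),
          (if x j ≠ 0 then lam (blk j) else 0) := by
      refine Finset.sum_congr rfl fun j hj => ?_
      rw [hoff j (by simpa using (Finset.mem_filter.mp hj).2)]
    rw [htail]; ring
  rw [hnorm]
  linarith

end Aux

open MeasureTheory Filter in
/-- Along the random sequence generated by (RCD-IHT), `F(xᵏ)` converges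
almost surely to a nonnegative random variable `F̃`, and `‖xᵏ⁺¹ - xᵏ‖ → 0` almost surely. -/
theorem statement10 {n N : ℕ} (blk : Fin n → Fin N) (lam : Fin N → ℝ)
    (hlam : ∀ i, 0 ≤ lam i) (hlam_pos : ∃ i, 0 < lam i)
    (f : EuclideanSpace ℝ (Fin n) → ℝ)
    (g : EuclideanSpace ℝ (Fin n) → EuclideanSpace ℝ (Fin n))
    (hconv : ConvexOn ℝ Set.univ f)
    (hgrad : ∀ x, HasGradientAt f (g x) x)
    (L : Fin N → ℝ) (hL : ∀ i, 0 < L i)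
    (hLip : ∀ (i : Fin N) (x : EuclideanSpace ℝ (Fin n))
      (h : EuclideanSpace ℝ {j : Fin n // blk j = i}),
      ‖blkProj blk i (g (x + blkEmbed blk i h)) - blkProj blk i (g x)‖ ≤ L i * ‖h‖)
    (u : ∀ i : Fin N, EuclideanSpace ℝ {j : Fin n // blk j = i} →
      EuclideanSpace ℝ (Fin n) → ℝ)
    (gu : ∀ i : Fin N, EuclideanSpace ℝ {j : Fin n // blk j = i} →
      EuclideanSpace ℝ (Fin n) → EuclideanSpace ℝ {j : Fin n // blk j = i})
    (M μ : Fin N → ℝ)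
    (hu : ApproxAssumption blk f g L u gu M μ)
    (T : ∀ i : Fin N, EuclideanSpace ℝ (Fin n) →
      EuclideanSpace ℝ {j : Fin n // blk j = i})
    (hT : ∀ (i : Fin N) (x : EuclideanSpace ℝ (Fin n))
      (y : EuclideanSpace ℝ {j : Fin n // blk j = i}),
      u i (T i x) x + lam i * blkNnz (T i x) ≤ u i y x + lam i * blkNnz y)
    -- `F` is bounded below (by 0)
    (hFlb : ∀ x, 0 ≤ f x + l0norm blk lam x)
    -- probability space and i.i.d. uniform block selections
    {Ω : Type*} [MeasurableSpace Ω] (P : Measure Ω) [IsProbabilityMeasure P]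
    (ik : ℕ → Ω → Fin N) (hmeas : ∀ k, Measurable (ik k))
    (hindep : ProbabilityTheory.iIndepFun ik P)
    (hunif : ∀ (k : ℕ) (i : Fin N), P {ω | ik k ω = i} = (N : ENNReal)⁻¹)
    -- the (RCD-IHT) process
    (x0 : EuclideanSpace ℝ (Fin n)) (X : ℕ → Ω → EuclideanSpace ℝ (Fin n))
    (hX0 : ∀ ω, X 0 ω = x0)
    (hXstep : ∀ (k : ℕ) (ω : Ω), X (k + 1) ω = rcdStep blk T (ik k ω) (X k ω)) :
    ∃ Ftilde : Ω → ℝ, (∀ ω, 0 ≤ Ftilde ω) ∧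
      ∀ᵐ ω ∂P,
        Tendsto (fun k => f (X k ω) + l0norm blk lam (X k ω)) atTop (nhds (Ftilde ω)) ∧
        Tendsto (fun k => ‖X (k + 1) ω - X k ω‖) atTop (nhds 0) := by
  obtain ⟨i0, _⟩ := hlam_pos
  haveI : Nonempty (Fin N) := ⟨i0⟩
  set m := Finset.univ.inf' Finset.univ_nonempty μ with hm_def
  have hm : 0 < m := (Finset.lt_inf'_iff _).mpr fun i _ => hu.mu_pos i
  have hmle : ∀ i, m ≤ μ i := fun i => Finset.inf'_le _ (Finset.mem_univ i)
  have hdec : ∀ (ω : Ω) (k : ℕ),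
      f (X (k+1) ω) + l0norm blk lam (X (k+1) ω)
        + m / 2 * ‖X (k+1) ω - X k ω‖ ^ 2
        ≤ f (X k ω) + l0norm blk lam (X k ω) := by
    intro ω k
    rw [hXstep k ω]
    have h := descent blk lam f g L u gu M μ hu T hT (ik k ω) (X k ω)
    have h2 : m / 2 * ‖rcdStep blk T (ik k ω) (X k ω) - X k ω‖ ^ 2
        ≤ μ (ik k ω) / 2 * ‖rcdStep blk T (ik k ω) (X k ω) - X k ω‖ ^ 2 := by
      gcongr
      exact hmle _
    linarith
  refine ⟨fun ω => ⨅ k, (f (X k ω) + l0norm blk lam (X k ω)), fun ω => le_ciInf fun k => hFlb _, ?_⟩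
  refine Filter.Eventually.of_forall fun ω => ?_
  set a : ℕ → ℝ := fun k => f (X k ω) + l0norm blk lam (X k ω) with ha
  have hanti : Antitone a := antitone_nat_of_succ_le fun k => by
    have h := hdec ω k
    show a (k+1) ≤ a k
    simp only [ha]
    nlinarith [sq_nonneg ‖X (k+1) ω - X k ω‖]
  have hbdd : BddBelow (Set.range a) := ⟨0, by rintro r ⟨k, rfl⟩; exact hFlb _⟩
  have hconv : Tendsto a atTop (nhds (⨅ k, a k)) := tendsto_atTop_ciInf hanti hbdd
  refine ⟨hconv, ?_⟩
  have hconv' : Tendsto (fun k => a (k+1)) atTop (nhds (⨅ k, a k)) :=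
    hconv.comp (tendsto_add_atTop_nat 1)
  have hdiff : Tendsto (fun k => a k - a (k+1)) atTop (nhds 0) := by
    simpa using hconv.sub hconv'
  have hsq : Tendsto (fun k => ‖X (k+1) ω - X k ω‖ ^ 2) atTop (nhds 0) := by
    have hlim : Tendsto (fun k => (2/m) * (a k - a (k+1))) atTop (nhds 0) := by
      simpa using hdiff.const_mul (2/m)
    refine squeeze_zero (fun k => sq_nonneg _) (fun k => ?_) hlim
    have h := hdec ω k
    have hkey : m / 2 * ‖X (k+1) ω - X k ω‖ ^ 2 ≤ a k - a (k+1) := by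
      simp only [ha]; linarith
    calc ‖X (k+1) ω - X k ω‖ ^ 2
        = (2/m) * (m / 2 * ‖X (k+1) ω - X k ω‖ ^ 2) := by field_simp
      _ ≤ (2/m) * (a k - a (k+1)) := by
          have h2m : (0:ℝ) ≤ 2/m := by positivity
          exact mul_le_mul_of_nonneg_left hkey h2m
  have hs : Tendsto (fun k => Real.sqrt (‖X (k+1) ω - X k ω‖ ^ 2)) atTop
      (nhds (Real.sqrt 0)) := (Real.continuous_sqrt.tendsto 0).comp hsq
  simpa [Real.sqrt_sq (norm_nonneg _)] using hs
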